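/- Let 𝔖 be an interval system on a set X, let W be a complete Hausdorff commutative topological group, and let μ : 𝔖 → W be a measure. Let Σ_c𝔖 denote the closure of 𝔖 under finitely many applications of union, intersection and set difference (which is again an interval system, in fact a ring of sets). Then there exists a unique measure μ_c : Σ_c𝔖 → W extending μ. -/

import Mathlib

/-- A family `S` of subsets of `X` is an *interval system* if for all `A, B ∈ S` there exist
countable pairwise disjoint families `D₁, D₂ ⊆ S` with `⋃₀ D₁ = A \ B` and `⋃₀ D₂ = A ∩ B`. -/
def IsIntervalSystem {X : Type*} (S : Set (Set X)) : Prop :=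
  ∀ A ∈ S, ∀ B ∈ S,
    (∃ D : Set (Set X), D ⊆ S ∧ D.Countable ∧ D.PairwiseDisjoint id ∧ ⋃₀ D = A \ B) ∧
    (∃ D : Set (Set X), D ⊆ S ∧ D.Countable ∧ D.PairwiseDisjoint id ∧ ⋃₀ D = A ∩ B)

/-- A map `μ` defined on the sets of `X`, with values in a commutative topological group, is
a *measure* on the set system `S` if it is σ-additive on `S`: whenever a member `B` of `S`
is the union of a countable pairwise disjoint family `(A i)` of members of `S`, the net of
finite partial sums `∑ i ∈ Ξ, μ (A i)` (over finite `Ξ`, directed by inclusion) converges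
to `μ B`, i.e. `HasSum (fun i => μ (A i)) (μ B)`. -/
def IsAddMeasure {X W : Type*} [AddCommMonoid W] [TopologicalSpace W]
    (S : Set (Set X)) (μ : Set X → W) : Prop :=
  ∀ (ι : Type) (A : ι → Set X) (B : Set X), Countable ι → B ∈ S →
    (∀ i, A i ∈ S) → (Pairwise fun i j => Disjoint (A i) (A j)) →
    (⋃ i, A i) = B → HasSum (fun i => μ (A i)) (μ B)

/-- The closure of `S` under finitely many applications of `∪`, `∩` and `\`. -/
inductive Constructible {X : Type*} (S : Set (Set X)) : Set X → Prop
  | base {A : Set X} : A ∈ S → Constructible S A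
  | union {A B : Set X} : Constructible S A → Constructible S B → Constructible S (A ∪ B)
  | inter {A B : Set X} : Constructible S A → Constructible S B → Constructible S (A ∩ B)
  | sdiff {A B : Set X} : Constructible S A → Constructible S B → Constructible S (A \ B)

namespace S8
open Set

variable {X : Type*}

/-- A countable disjoint partition of `A` into nonempty members of `S`. -/
def Pt (S : Set (Set X)) (A : Set X) (D : Set (Set X)) : Prop :=
  D ⊆ S ∧ D.Countable ∧ D.PairwiseDisjoint id ∧ ⋃₀ D = A ∧ ∅ ∉ D

def InA (S : Set (Set X)) (A : Set X) : Prop := ∃ D, Pt S A D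

theorem Pt.subset_of_mem {S : Set (Set X)} {A D d} (h : Pt S A D) (hd : d ∈ D) : d ⊆ A := by
  rw [← h.2.2.2.1]; exact subset_sUnion_of_mem hd

theorem Pt.ne_empty {S : Set (Set X)} {A D d} (h : Pt S A D) (hd : d ∈ D) : d ≠ ∅ :=
  fun he => h.2.2.2.2 (he ▸ hd)

theorem Pt.congr_set {S : Set (Set X)} {A B D} (h : Pt S A D) (hAB : A = B) : Pt S B D :=
  hAB ▸ h

theorem pt_of_raw {S : Set (Set X)} {A : Set X} {D : Set (Set X)} (h1 : D ⊆ S)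
    (h2 : D.Countable) (h3 : D.PairwiseDisjoint id) (h4 : ⋃₀ D = A) :
    Pt S A (D \ {∅}) := by
  refine ⟨fun d hd => h1 hd.1, h2.mono diff_subset, h3.subset diff_subset, ?_,
    fun h => h.2 rfl⟩
  rw [← h4]
  apply subset_antisymm (sUnion_subset fun d hd => subset_sUnion_of_mem hd.1)
  intro x hx
  obtain ⟨d, hd, hxd⟩ := hx
  exact ⟨d, ⟨hd, fun he => by simp only [mem_singleton_iff] at he; subst he; exact hxd⟩, hxd⟩

theorem inA_congr {S : Set (Set X)} {A B : Set X} (h : InA S A) (hAB : A = B) : InA S B :=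
  hAB ▸ h

theorem inA_base {S : Set (Set X)} (hS : IsIntervalSystem S) {A : Set X} (hA : A ∈ S) :
    InA S A := by
  obtain ⟨-, D, h1, h2, h3, h4⟩ := hS A hA A hA
  exact ⟨_, pt_of_raw h1 h2 h3 (by rwa [inter_self] at h4)⟩

theorem inA_inter_base {S : Set (Set X)} (hS : IsIntervalSystem S) {a b : Set X}
    (ha : a ∈ S) (hb : b ∈ S) : InA S (a ∩ b) := by
  obtain ⟨-, D, h1, h2, h3, h4⟩ := hS a ha b hb
  exact ⟨_, pt_of_raw h1 h2 h3 h4⟩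

theorem inA_diff_base {S : Set (Set X)} (hS : IsIntervalSystem S) {a b : Set X}
    (ha : a ∈ S) (hb : b ∈ S) : InA S (a \ b) := by
  obtain ⟨⟨D, h1, h2, h3, h4⟩, -⟩ := hS a ha b hb
  exact ⟨_, pt_of_raw h1 h2 h3 h4⟩

theorem inA_sUnion {S : Set (Set X)} {E : Set (Set X)} (hc : E.Countable)
    (hd : E.PairwiseDisjoint id) (h : ∀ e ∈ E, InA S e) {A : Set X} (hU : ⋃₀ E = A) :
    InA S A := by
  choose D hD using h
  have : Countable E := hc.to_subtype
  refine ⟨⋃ e : E, D e e.2, ?_, ?_, ?_, ?_, ?_⟩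
  · exact iUnion_subset fun e => (hD e e.2).1
  · exact countable_iUnion fun e => (hD e e.2).2.1
  · intro x hx y hy hxy
    obtain ⟨e, hxe⟩ := mem_iUnion.mp hx
    obtain ⟨f, hyf⟩ := mem_iUnion.mp hy
    by_cases hef : e = f
    · subst hef; exact (hD e e.2).2.2.1 hxe hyf hxy
    · have hef' : (e : Set X) ≠ f := fun h => hef (Subtype.ext h)
      have := hd e.2 f.2 hef'
      exact this.mono ((hD e e.2).subset_of_mem hxe) ((hD f f.2).subset_of_mem hyf)
  · rw [sUnion_iUnion]
    rw [← hU, sUnion_eq_iUnion]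
    exact iUnion_congr fun e => (hD e e.2).2.2.2.1
  · intro hmem
    obtain ⟨e, he⟩ := mem_iUnion.mp hmem
    exact (hD e e.2).2.2.2.2 he

theorem inA_inter_left {S : Set (Set X)} (hS : IsIntervalSystem S) {a B : Set X}
    (ha : a ∈ S) (hB : InA S B) : InA S (a ∩ B) := by
  obtain ⟨D, hD⟩ := hB
  refine inA_sUnion (E := (a ∩ ·) '' D) (hD.2.1.image _) ?_ ?_ ?_
  · rintro x ⟨d, hd, rfl⟩ y ⟨d', hd', rfl⟩ hxy
    have hdd' : d ≠ d' := fun h => hxy (by rw [h])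
    exact (hD.2.2.1 hd hd' hdd').mono inter_subset_right inter_subset_right
  · rintro e ⟨d, hd, rfl⟩
    exact inA_inter_base hS ha (hD.1 hd)
  · rw [sUnion_image, ← inter_iUnion₂]
    congr 1
    rw [← hD.2.2.2.1, sUnion_eq_biUnion]

theorem inA_inter {S : Set (Set X)} (hS : IsIntervalSystem S) {A B : Set X}
    (hA : InA S A) (hB : InA S B) : InA S (A ∩ B) := by
  obtain ⟨D, hD⟩ := hA
  refine inA_sUnion (E := (· ∩ B) '' D) (hD.2.1.image _) ?_ ?_ ?_
  · rintro x ⟨d, hd, rfl⟩ y ⟨d', hd', rfl⟩ hxy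
    have hdd' : d ≠ d' := fun h => hxy (by rw [h])
    exact (hD.2.2.1 hd hd' hdd').mono inter_subset_left inter_subset_left
  · rintro e ⟨d, hd, rfl⟩
    exact inA_inter_left hS (hD.1 hd) hB
  · rw [sUnion_image, ← iUnion₂_inter]
    congr 1
    rw [← hD.2.2.2.1, sUnion_eq_biUnion]

theorem inA_union_disjoint {S : Set (Set X)} {A B : Set X} (h : Disjoint A B)
    (hA : InA S A) (hB : InA S B) : InA S (A ∪ B) := by
  refine inA_sUnion (E := {A, B}) (Set.toFinite _).countable ?_ ?_ ?_
  · intro x hx y hy hxy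
    rcases hx with rfl | rfl <;> rcases hy with rfl | rfl
    · exact absurd rfl hxy
    · exact h
    · exact h.symm
    · exact absurd rfl hxy
  · rintro e (rfl | rfl) <;> assumption
  · exact sUnion_pair A B

theorem inA_diff_lift {S : Set (Set X)} {B : Set X} (h : ∀ c ∈ S, InA S (c \ B))
    {C : Set X} (hC : InA S C) : InA S (C \ B) := by
  obtain ⟨D, hD⟩ := hC
  refine inA_sUnion (E := (· \ B) '' D) (hD.2.1.image _) ?_ ?_ ?_
  · rintro x ⟨d, hd, rfl⟩ y ⟨d', hd', rfl⟩ hxy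
    have hdd' : d ≠ d' := fun hh => hxy (by rw [hh])
    exact (hD.2.2.1 hd hd' hdd').mono diff_subset diff_subset
  · rintro e ⟨d, hd, rfl⟩
    exact h d (hD.1 hd)
  · rw [sUnion_image, biUnion_eq_iUnion, ← iUnion_diff, ← sUnion_eq_iUnion, hD.2.2.2.1]

theorem inA_main {S : Set (Set X)} (hS : IsIntervalSystem S) {B : Set X}
    (hB : Constructible S B) :
    InA S B ∧ ∀ C, InA S C → InA S (C \ B) := by
  induction hB with
  | @base b hb =>
    exact ⟨inA_base hS hb, fun C hC =>
      inA_diff_lift (fun c hc => inA_diff_base hS hc hb) hC⟩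
  | @union B₁ B₂ h₁ h₂ ih₁ ih₂ =>
    constructor
    · have : B₁ ∪ (B₂ \ B₁) = B₁ ∪ B₂ := union_diff_self
      exact inA_congr (inA_union_disjoint disjoint_sdiff_right ih₁.1 (ih₁.2 _ ih₂.1)) this
    · intro C hC
      have : (C \ B₁) \ B₂ = C \ (B₁ ∪ B₂) := diff_diff
      exact inA_congr (ih₂.2 _ (ih₁.2 _ hC)) this
  | @inter B₁ B₂ h₁ h₂ ih₁ ih₂ =>
    constructor
    · exact inA_inter hS ih₁.1 ih₂.1
    · intro C hC
      refine inA_diff_lift (fun c hc => ?_) hC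
      have heq : (c \ B₁) ∪ ((c ∩ B₁) \ B₂) = c \ (B₁ ∩ B₂) := by
        ext x; simp only [mem_union, mem_diff, mem_inter_iff]; tauto
      have hdis : Disjoint (c \ B₁) ((c ∩ B₁) \ B₂) := by
        rw [Set.disjoint_left]
        rintro x ⟨-, hx1⟩ ⟨⟨-, hx2⟩, -⟩
        exact hx1 hx2
      exact inA_congr (inA_union_disjoint hdis (ih₁.2 _ (inA_base hS hc))
        (ih₂.2 _ (inA_inter hS (inA_base hS hc) ih₁.1))) heq
  | @sdiff B₁ B₂ h₁ h₂ ih₁ ih₂ =>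
    constructor
    · exact ih₂.2 _ ih₁.1
    · intro C hC
      refine inA_diff_lift (fun c hc => ?_) hC
      have heq : (c \ B₁) ∪ (c ∩ B₁ ∩ B₂) = c \ (B₁ \ B₂) := by
        ext x; simp only [mem_union, mem_diff, mem_inter_iff]; tauto
      have hdis : Disjoint (c \ B₁) (c ∩ B₁ ∩ B₂) := by
        rw [Set.disjoint_left]
        rintro x ⟨-, hx1⟩ ⟨⟨-, hx2⟩, -⟩
        exact hx1 hx2
      exact inA_congr (inA_union_disjoint hdis (ih₁.2 _ (inA_base hS hc))
        (inA_inter hS (inA_inter hS (inA_base hS hc) ih₁.1) ih₂.1)) heq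

theorem inA_constructible {S : Set (Set X)} (hS : IsIntervalSystem S) {A : Set X}
    (hA : Constructible S A) : InA S A := (inA_main hS hA).1

section Sums
set_option linter.unusedSectionVars false

variable {W : Type*} [AddCommGroup W] [UniformSpace W] [IsUniformAddGroup W]
    [CompleteSpace W] [T2Space W]

/-- σ-additivity applied to a `Pt`-partition of a member of the system. -/
theorem hasSum_pt {T : Set (Set X)} {ν : Set X → W} (hν : IsAddMeasure T ν)
    {S : Set (Set X)} {B : Set X} {D : Set (Set X)} (hB : B ∈ T) (hDT : D ⊆ T)
    (hD : Pt S B D) : HasSum (fun d : D => ν ↑d) (ν B) := by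
  have hco : Countable (↥D) := hD.2.1.to_subtype
  obtain ⟨f, hf⟩ := (countable_iff_exists_injective ↥D).mp hco
  set e : ↥D ≃ Set.range f := Equiv.ofInjective f hf with he
  have key := hν ↥(Set.range f) (fun i => ↑(e.symm i)) B inferInstance hB
    (fun i => hDT (e.symm i).2) ?_ ?_
  · exact (Equiv.hasSum_iff e.symm).mp key
  · intro i j hij
    have hne : ((e.symm i : Set X)) ≠ ↑(e.symm j) := by
      intro hh
      exact hij (e.symm.injective (Subtype.ext hh))
    exact hD.2.2.1 (e.symm i).2 (e.symm j).2 hne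
  · rw [← hD.2.2.2.1, sUnion_eq_iUnion]
    exact e.symm.surjective.iUnion_comp _

/-- All partitions of `A` sum to `t`. -/
def GoodPt (S : Set (Set X)) (μ : Set X → W) (A : Set X) (t : W) : Prop :=
  ∀ D, Pt S A D → HasSum (fun d : D => μ ↑d) t

theorem GoodPt.congr_set {S : Set (Set X)} {μ : Set X → W} {A B : Set X} {t : W}
    (h : GoodPt S μ A t) (hAB : A = B) : GoodPt S μ B t := hAB ▸ h

theorem pt_iUnion {S : Set (Set X)} {ι : Type*} [Countable ι] {A : ι → Set X}
    {D : ι → Set (Set X)} (hdis : Pairwise (Function.onFun Disjoint A)) (h : ∀ i, Pt S (A i) (D i)) :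
    Pt S (⋃ i, A i) (⋃ i, D i) := by
  refine ⟨iUnion_subset fun i => (h i).1, countable_iUnion fun i => (h i).2.1, ?_, ?_, ?_⟩
  · intro x hx y hy hxy
    obtain ⟨i, hxi⟩ := mem_iUnion.mp hx
    obtain ⟨j, hyj⟩ := mem_iUnion.mp hy
    by_cases hij : i = j
    · subst hij; exact (h i).2.2.1 hxi hyj hxy
    · exact (hdis hij).mono ((h i).subset_of_mem hxi) ((h j).subset_of_mem hyj)
  · rw [sUnion_iUnion]
    exact iUnion_congr fun i => (h i).2.2.2.1
  · intro hmem
    obtain ⟨i, hi⟩ := mem_iUnion.mp hmem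
    exact (h i).2.2.2.2 hi

theorem hasSum_sigma_of_pt {S : Set (Set X)} (μ : Set X → W) {ι : Type*} {A : ι → Set X}
    {D : ι → Set (Set X)} (hdis : Pairwise (Function.onFun Disjoint A)) (h : ∀ i, Pt S (A i) (D i))
    {t : W} (htot : HasSum (fun d : ↥(⋃ i, D i) => μ ↑d) t) :
    HasSum (fun p : Σ i, ↥(D i) => μ ↑p.2) t := by
  let φ : (Σ i, ↥(D i)) → ↥(⋃ i, D i) := fun p => ⟨↑p.2, mem_iUnion.mpr ⟨p.1, p.2.2⟩⟩
  have hbij : Function.Bijective φ := by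
    constructor
    · rintro ⟨i, d⟩ ⟨j, d'⟩ hpq
      have hval : (d : Set X) = ↑d' := congrArg Subtype.val hpq
      by_cases hij : i = j
      · subst hij
        exact congrArg (Sigma.mk i) (Subtype.ext hval)
      · exfalso
        have h1 : (d : Set X) ⊆ A i := (h i).subset_of_mem d.2
        have h2 : (d : Set X) ⊆ A j := hval ▸ (h j).subset_of_mem d'.2
        have : (d : Set X) ⊆ ∅ := (hdis hij).le_bot.trans (le_refl _) |>.trans' (le_inf h1 h2)
        exact (h i).ne_empty d.2 (subset_empty_iff.mp this)
    · rintro ⟨d, hd⟩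
      obtain ⟨i, hdi⟩ := mem_iUnion.mp hd
      exact ⟨⟨i, ⟨d, hdi⟩⟩, rfl⟩
  exact ((Equiv.ofBijective φ hbij).hasSum_iff).mpr htot

theorem pt_union_disjoint {S : Set (Set X)} {A B : Set X} {DA DB : Set (Set X)}
    (hd : Disjoint A B) (hA : Pt S A DA) (hB : Pt S B DB) : Pt S (A ∪ B) (DA ∪ DB) := by
  refine ⟨union_subset hA.1 hB.1, hA.2.1.union hB.2.1, ?_, ?_, ?_⟩
  · intro x hx y hy hxy
    rcases hx with hx | hx <;> rcases hy with hy | hy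
    · exact hA.2.2.1 hx hy hxy
    · exact hd.mono (hA.subset_of_mem hx) (hB.subset_of_mem hy)
    · exact (hd.mono (hA.subset_of_mem hy) (hB.subset_of_mem hx)).symm
    · exact hB.2.2.1 hx hy hxy
  · rw [sUnion_union, hA.2.2.2.1, hB.2.2.2.1]
  · rintro (hm | hm)
    · exact hA.2.2.2.2 hm
    · exact hB.2.2.2.2 hm

theorem pt_disjoint {S : Set (Set X)} {A B : Set X} {DA DB : Set (Set X)}
    (hd : Disjoint A B) (hA : Pt S A DA) (hB : Pt S B DB) : Disjoint DA DB := by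
  rw [Set.disjoint_left]
  intro d hdA hdB
  have h1 : d ⊆ A := hA.subset_of_mem hdA
  have h2 : d ⊆ B := hB.subset_of_mem hdB
  exact hA.ne_empty hdA (subset_empty_iff.mp ((le_inf h1 h2).trans hd.le_bot))

theorem goodPt_union {S : Set (Set X)} {μ : Set X → W} (hS : IsIntervalSystem S)
    (hμ : IsAddMeasure S μ) {Z₁ Z₂ : Set X} (hdis : Disjoint Z₁ Z₂) {t₁ t₂ : W}
    (h₁ : GoodPt S μ Z₁ t₁) (h₂ : GoodPt S μ Z₂ t₂) (hA₁ : InA S Z₁) (hA₂ : InA S Z₂) :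
    GoodPt S μ (Z₁ ∪ Z₂) (t₁ + t₂) := by
  intro D hD
  have hco : Countable (↥D) := hD.2.1.to_subtype
  have hPex : ∀ d : D, ∃ P, Pt S (↑d ∩ Z₁) P :=
    fun d => inA_inter hS (inA_base hS (hD.1 d.2)) hA₁
  have hQex : ∀ d : D, ∃ Q, Pt S (↑d ∩ Z₂) Q :=
    fun d => inA_inter hS (inA_base hS (hD.1 d.2)) hA₂
  choose P hP using hPex
  choose Q hQ using hQex
  have hpair : Pairwise (Function.onFun Disjoint fun d : D => (d : Set X)) := by
    intro d d' hdd'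
    have : (d : Set X) ≠ ↑d' := fun hh => hdd' (Subtype.ext hh)
    exact hD.2.2.1 d.2 d'.2 this
  have hR : ∀ d : D, Pt S ↑d (P d ∪ Q d) := by
    intro d
    have hdsub : (d : Set X) ⊆ Z₁ ∪ Z₂ := hD.subset_of_mem d.2
    have heq : (↑d ∩ Z₁) ∪ (↑d ∩ Z₂) = (d : Set X) := by
      rw [← inter_union_distrib_left]
      exact inter_eq_left.mpr hdsub
    exact (pt_union_disjoint (hdis.mono inter_subset_right inter_subset_right)
      (hP d) (hQ d)).congr_set heq
  -- the united refinements
  have hF₁ : Pt S Z₁ (⋃ d : D, P d) := by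
    have := pt_iUnion (A := fun d : D => ↑d ∩ Z₁) (D := P)
      (fun d d' hdd' => (hpair hdd').mono inter_subset_left inter_subset_left) hP
    refine this.congr_set ?_
    rw [← iUnion_inter, ← sUnion_eq_iUnion, hD.2.2.2.1, union_inter_cancel_left]
  have hF₂ : Pt S Z₂ (⋃ d : D, Q d) := by
    have := pt_iUnion (A := fun d : D => ↑d ∩ Z₂) (D := Q)
      (fun d d' hdd' => (hpair hdd').mono inter_subset_left inter_subset_left) hQ
    refine this.congr_set ?_
    rw [← iUnion_inter, ← sUnion_eq_iUnion, hD.2.2.2.1, union_inter_cancel_right]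
  have hs₁ : HasSum (fun d : ↥(⋃ d : D, P d) => μ ↑d) t₁ := h₁ _ hF₁
  have hs₂ : HasSum (fun d : ↥(⋃ d : D, Q d) => μ ↑d) t₂ := h₂ _ hF₂
  have hdisF : Disjoint (⋃ d : D, P d) (⋃ d : D, Q d) := pt_disjoint hdis hF₁ hF₂
  have hsU : HasSum (fun d : ↥((⋃ d : D, P d) ∪ ⋃ d : D, Q d) => μ ↑d) (t₁ + t₂) :=
    hs₁.add_disjoint hdisF hs₂
  have hunion_eq : (⋃ d : D, P d) ∪ (⋃ d : D, Q d) = ⋃ d : D, (P d ∪ Q d) :=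
    (iUnion_union_distrib P Q).symm
  rw [hunion_eq] at hsU
  have hsig : HasSum (fun p : Σ d : D, ↥(P d ∪ Q d) => μ ↑p.2) (t₁ + t₂) := by
    have := hasSum_sigma_of_pt (A := fun d : D => (d : Set X)) μ hpair hR hsU
    exact this
  exact hsig.sigma fun d => hasSum_pt hμ (hD.1 d.2) (hR d).1 (hR d)

theorem goodPt_piece {S : Set (Set X)} {μ : Set X → W}
    {Z₁ Z₂ : Set X} (hdis : Disjoint Z₁ Z₂) {t : W} (ht : GoodPt S μ (Z₁ ∪ Z₂) t)
    {D' : Set (Set X)} (hD' : Pt S Z₂ D') :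
    GoodPt S μ Z₁ (t - ∑' d : D', μ ↑d) := by
  intro D hD
  have hdisj : Disjoint D D' := pt_disjoint hdis hD hD'
  have hDU : Pt S (Z₁ ∪ Z₂) (D ∪ D') := pt_union_disjoint hdis hD hD'
  have htot : HasSum (fun d : ↥(D ∪ D') => μ ↑d) t := ht _ hDU
  have hind : Summable ((D ∪ D').indicator μ) :=
    summable_subtype_iff_indicator.mp ⟨t, htot⟩
  have hsD : Summable (fun d : D => μ ↑d) := by
    refine (hind.subtype D).congr fun d => ?_
    exact indicator_of_mem (mem_union_left _ d.2) μ
  have hsD' : Summable (fun d : ↥D' => μ ↑d) := by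
    refine (hind.subtype D').congr fun d => ?_
    exact indicator_of_mem (mem_union_right _ d.2) μ
  have hadd : HasSum (fun d : ↥(D ∪ D') => μ ↑d)
      ((∑' d : D, μ ↑d) + ∑' d : ↥D', μ ↑d) := hsD.hasSum.add_disjoint hdisj hsD'.hasSum
  have hteq : t = (∑' d : D, μ ↑d) + ∑' d : ↥D', μ ↑d := htot.unique hadd
  have : (∑' d : D, μ ↑d) = t - ∑' d : ↥D', μ ↑d := by rw [hteq]; abel
  exact this ▸ hsD.hasSum

theorem disj_sdiff_inter (A B : Set X) : Disjoint (A \ B) (A ∩ B) :=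
  disjoint_sdiff_left.mono_right inter_subset_right

theorem good_constructible {S : Set (Set X)} {μ : Set X → W} (hS : IsIntervalSystem S)
    (hμ : IsAddMeasure S μ) {A : Set X} (hA : Constructible S A) :
    ∃ t, GoodPt S μ A t := by
  induction hA with
  | @base a ha =>
    exact ⟨μ a, fun D hD => hasSum_pt hμ ha hD.1 hD⟩
  | @union A B hA hB ihA ihB =>
    obtain ⟨tA, htA⟩ := ihA
    obtain ⟨tB, htB⟩ := ihB
    obtain ⟨DI, hDI⟩ : InA S (A ∩ B) :=
      inA_inter hS (inA_constructible hS hA) (inA_constructible hS hB)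
    have hdiff : GoodPt S μ (A \ B) (tA - ∑' d : ↥DI, μ ↑d) :=
      goodPt_piece (disj_sdiff_inter A B)
        (htA.congr_set (diff_union_inter A B).symm) hDI
    refine ⟨(tA - ∑' d : ↥DI, μ ↑d) + tB, ?_⟩
    have := goodPt_union hS hμ disjoint_sdiff_left hdiff htB
      ((inA_main hS hB).2 A (inA_constructible hS hA)) (inA_constructible hS hB)
    exact this.congr_set (diff_union_self)
  | @inter A B hA hB ihA ihB =>
    obtain ⟨tA, htA⟩ := ihA
    obtain ⟨DI, hDI⟩ : InA S (A \ B) :=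
      (inA_main hS hB).2 A (inA_constructible hS hA)
    exact ⟨tA - ∑' d : ↥DI, μ ↑d,
      goodPt_piece (disj_sdiff_inter A B).symm
        (htA.congr_set (inter_union_diff A B).symm) hDI⟩
  | @sdiff A B hA hB ihA ihB =>
    obtain ⟨tA, htA⟩ := ihA
    obtain ⟨DI, hDI⟩ : InA S (A ∩ B) :=
      inA_inter hS (inA_constructible hS hA) (inA_constructible hS hB)
    exact ⟨tA - ∑' d : ↥DI, μ ↑d,
      goodPt_piece (disj_sdiff_inter A B)
        (htA.congr_set (diff_union_inter A B).symm) hDI⟩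

end Sums

end S8

/-- A measure `μ : S → W` on an interval system `S` has a unique extension to a
measure on the `(∪, ∩, \)`-constructible closure of `S`. -/
theorem statement8 {X W : Type*}
    [AddCommGroup W] [UniformSpace W] [IsUniformAddGroup W] [CompleteSpace W] [T2Space W]
    (S : Set (Set X)) (hS : IsIntervalSystem S)
    (μ : Set X → W) (hμ : IsAddMeasure S μ) :
    (∃ ν : Set X → W, (∀ A ∈ S, ν A = μ A) ∧
        IsAddMeasure {A : Set X | Constructible S A} ν) ∧
    (∀ ν₁ ν₂ : Set X → W, (∀ A ∈ S, ν₁ A = μ A) → (∀ A ∈ S, ν₂ A = μ A) →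
      IsAddMeasure {A : Set X | Constructible S A} ν₁ →
      IsAddMeasure {A : Set X | Constructible S A} ν₂ →
      ∀ A : Set X, Constructible S A → ν₁ A = ν₂ A) := by
  classical
  have hgood : ∀ A, Constructible S A → ∃ t, S8.GoodPt S μ A t :=
    fun A hA => S8.good_constructible hS hμ hA
  let ν : Set X → W := fun A => if h : ∃ t, S8.GoodPt S μ A t then h.choose else 0
  have hν : ∀ A, Constructible S A → S8.GoodPt S μ A (ν A) := by
    intro A hA
    have h := hgood A hA
    simp only [ν, dif_pos h]
    exact h.choose_spec
  have hext : ∀ A ∈ S, ν A = μ A := by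
    intro A hA
    obtain ⟨D₀, hD₀⟩ := S8.inA_base hS hA
    exact (hν A (Constructible.base hA) D₀ hD₀).unique (S8.hasSum_pt hμ hA hD₀.1 hD₀)
  refine ⟨⟨ν, hext, ?_⟩, ?_⟩
  · intro ι A B hι hB hA hdis hU
    haveI := hι
    have hDex : ∀ i, ∃ D, S8.Pt S (A i) D := fun i => S8.inA_constructible hS (hA i)
    choose D hD using hDex
    have hptB : S8.Pt S B (⋃ i, D i) := (S8.pt_iUnion hdis hD).congr_set hU
    have htot : HasSum (fun d : ↥(⋃ i, D i) => μ ↑d) (ν B) := hν B hB _ hptB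
    have hsig := S8.hasSum_sigma_of_pt μ hdis hD htot
    exact hsig.sigma fun i => hν (A i) (hA i) _ (hD i)
  · intro ν₁ ν₂ h₁ h₂ hm₁ hm₂ A hA
    obtain ⟨D, hDpt⟩ := S8.inA_constructible hS hA
    have k₁ : HasSum (fun d : D => ν₁ ↑d) (ν₁ A) :=
      S8.hasSum_pt hm₁ hA (fun d hd => Constructible.base (hDpt.1 hd)) hDpt
    have k₂ : HasSum (fun d : D => ν₂ ↑d) (ν₂ A) :=
      S8.hasSum_pt hm₂ hA (fun d hd => Constructible.base (hDpt.1 hd)) hDpt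
    have hfe : (fun d : D => ν₁ ↑d) = fun d : D => ν₂ ↑d :=
      funext fun d => by rw [h₁ _ (hDpt.1 d.2), h₂ _ (hDpt.1 d.2)]
    have k₂' : HasSum (fun d : D => ν₁ ↑d) (ν₂ A) := by rw [hfe]; exact k₂
    exact k₁.unique k₂'
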